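/- For all real numbers x, t with 0 < x ≤ 0.2 and 2x/(1+x) ≤ t ≤ 1, one has F(x,t) ≤ (1/2)·x·t·(1 − x/t + log(x/t)). -/

import Mathlib

/-- `h x = -x log x` (with `h 0 = 0`, since `Real.log 0 = 0`). -/
noncomputable def entH (x : ℝ) : ℝ := -x * Real.log x

/-- `H x = h x + h (1 - x)`. -/
noncomputable def entHH (x : ℝ) : ℝ := entH x + entH (1 - x)

/-- The rate function `F(x,t)`. -/
noncomputable def entF (x t : ℝ) : ℝ :=
  (1 / 2) * entH (t * x) + entH ((1 - t) * x) + (1 / 2) * entH (1 - (2 - t) * x) - entHH x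

open Real

-- cubic upper bound for log(1+x)
lemma log_one_add_cubic {x : ℝ} (hx : 0 ≤ x) :
    Real.log (1 + x) ≤ x - x^2/2 + x^3/3 := by
  set f : ℝ → ℝ := fun y => y - y^2/2 + y^3/3 - Real.log (1 + y) with hf
  have hd : ∀ y : ℝ, -1 < y → HasDerivAt f (y^3/(1+y)) y := by
    intro y hy
    have h1 : (1:ℝ) + y ≠ 0 := by linarith
    have hlog : HasDerivAt (fun y : ℝ => Real.log (1 + y)) (1/(1+y)) y := by
      have := (Real.hasDerivAt_log h1).comp y
        ((hasDerivAt_id y).const_add (1:ℝ))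
      exact this.congr_deriv (by simp)
    have hpoly : HasDerivAt (fun y : ℝ => y - y^2/2 + y^3/3)
        (1 - y + y^2) y := by
      have := ((hasDerivAt_id y).sub (((hasDerivAt_pow 2 y)).div_const 2)).add
        ((hasDerivAt_pow 3 y).div_const 3)
      refine this.congr_deriv ?_
      ring
    have := hpoly.sub hlog
    refine this.congr_deriv ?_
    field_simp
    ring
  have hmono : MonotoneOn f (Set.Ici 0) := by
    apply monotoneOn_of_deriv_nonneg (convex_Ici 0)
    · intro y hy
      exact (hd y (by simp at hy; linarith)).continuousAt.continuousWithinAt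
    · intro y hy
      rw [interior_Ici] at hy
      exact (hd y (by simp at hy; linarith)).differentiableAt.differentiableWithinAt
    · intro y hy
      rw [interior_Ici] at hy
      simp only [Set.mem_Ioi] at hy
      rw [(hd y (by linarith)).deriv]
      positivity
  have h0 : f 0 = 0 := by simp [hf]
  have := hmono (Set.self_mem_Ici) (Set.mem_Ici.2 hx) hx
  rw [h0] at this
  simp only [hf] at this
  linarith

-- cubic upper bound for log(1-x)
lemma log_one_sub_cubic {x : ℝ} (hx : 0 ≤ x) (hx1 : x < 1) :
    Real.log (1 - x) ≤ -x - x^2/2 - x^3/3 := by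
  set f : ℝ → ℝ := fun y => -y - y^2/2 - y^3/3 - Real.log (1 - y) with hf
  have hd : ∀ y : ℝ, y < 1 → HasDerivAt f (y^3/(1-y)) y := by
    intro y hy
    have h1 : (1:ℝ) - y ≠ 0 := by linarith
    have hlog : HasDerivAt (fun y : ℝ => Real.log (1 - y)) (-(1/(1-y))) y := by
      have := (Real.hasDerivAt_log h1).comp y
        ((hasDerivAt_id y).const_sub (1:ℝ))
      refine this.congr_deriv ?_
      field_simp
    have hpoly : HasDerivAt (fun y : ℝ => -y - y^2/2 - y^3/3)
        (-1 - y - y^2) y := by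
      have := (((hasDerivAt_id y).neg).sub (((hasDerivAt_pow 2 y)).div_const 2)).sub
        ((hasDerivAt_pow 3 y).div_const 3)
      refine this.congr_deriv ?_
      ring
    have := hpoly.sub hlog
    refine this.congr_deriv ?_
    field_simp
    ring
  have hmono : MonotoneOn f (Set.Ico 0 1) := by
    apply monotoneOn_of_deriv_nonneg (convex_Ico 0 1)
    · intro y hy
      exact (hd y hy.2).continuousAt.continuousWithinAt
    · intro y hy
      rw [interior_Ico] at hy
      exact (hd y hy.2).differentiableAt.differentiableWithinAt
    · intro y hy
      rw [interior_Ico] at hy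
      rw [(hd y hy.2).deriv]
      have h1 := hy.1
      have h2 := hy.2
      apply div_nonneg (by positivity) (by linarith)
  have h0 : f 0 = 0 := by simp [hf]
  have := hmono (by constructor <;> norm_num) (Set.mem_Ico.2 ⟨hx, hx1⟩) hx
  rw [h0] at this
  simp only [hf] at this
  linarith

-- the endpoint polynomial inequality
lemma Pineq {x : ℝ} (hx : 0 ≤ x) (hx2 : x ≤ 0.2) :
    Real.log (1 - x) + (1 + 2*x) * Real.log (1 + x) - x^2 ≤ 0 := by
  have h1 := log_one_sub_cubic hx (by linarith)
  have h2 := log_one_add_cubic hx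
  nlinarith [mul_nonneg hx hx, mul_nonneg (mul_nonneg hx hx) hx,
    mul_le_mul_of_nonneg_left h2 (show (0:ℝ) ≤ 1 + 2*x by linarith)]

noncomputable def Gx (x s : ℝ) : ℝ :=
  -(x * (s * Real.log s)) - (1/2) * ((1 - x - s*x) * Real.log (1 - x - s*x)) + x*s/2

lemma Gx_mono {x : ℝ} (hx : 0 < x) (hx2 : x ≤ 0.2) :
    MonotoneOn (Gx x) (Set.Icc 0 ((1-x)/(1+x))) := by
  have h1x : (0:ℝ) < 1 + x := by linarith
  have hder : ∀ s : ℝ, 0 < s → s < (1-x)/(1+x) →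
      HasDerivAt (Gx x) (x * ((1/2) * Real.log (1 - x - s*x) - Real.log s)) s ∧
      0 ≤ x * ((1/2) * Real.log (1 - x - s*x) - Real.log s) := by
    intro s hs0 hsm
    have hsx : s * (1 + x) < 1 - x := (lt_div_iff₀ h1x).mp hsm
    have hwpos : 0 < 1 - x - s*x := by nlinarith
    have hsq : s^2 ≤ 1 - x - s*x := by nlinarith
    have h2 : HasDerivAt (fun s : ℝ => 1 - x - s*x) (-x) s := by
      have := ((hasDerivAt_id s).mul_const x).const_sub (1-x)
      exact this.congr_deriv (by ring)
    have h3 : HasDerivAt (fun s : ℝ => (1 - x - s*x) * Real.log (1 - x - s*x))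
        ((Real.log (1 - x - s*x) + 1) * (-x)) s :=
      by have := (Real.hasDerivAt_mul_log hwpos.ne').comp s h2; exact this
    have hG : HasDerivAt (Gx x)
        (x * ((1/2) * Real.log (1 - x - s*x) - Real.log s)) s := by
      have := (((Real.hasDerivAt_mul_log hs0.ne').const_mul x).neg.sub
        (h3.const_mul (1/2))).add (((hasDerivAt_id s).const_mul x).div_const 2)
      refine this.congr_deriv ?_
      ring
    refine ⟨hG, ?_⟩
    have hlog : Real.log s ≤ (1/2) * Real.log (1 - x - s*x) := by
      have : Real.log (s^2) ≤ Real.log (1 - x - s*x) :=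
        Real.log_le_log (by positivity) hsq
      rw [Real.log_pow] at this
      push_cast at this
      linarith
    have := hx.le
    nlinarith
  apply monotoneOn_of_deriv_nonneg (convex_Icc _ _)
  · apply Continuous.continuousOn
    unfold Gx
    have c1 : Continuous fun s : ℝ => s * Real.log s := Real.continuous_mul_log
    have c2 : Continuous fun s : ℝ => 1 - x - s*x :=
      (continuous_const.sub (continuous_id.mul continuous_const))
    have c3 : Continuous fun s : ℝ => (1 - x - s*x) * Real.log (1 - x - s*x) :=
      c1.comp c2
    exact (((continuous_const.mul c1).neg).sub
      (continuous_const.mul c3)).add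
      ((continuous_const.mul continuous_id).div_const 2)
  · intro s hs
    rw [interior_Icc] at hs
    exact ((hder s hs.1 hs.2).1).differentiableAt.differentiableWithinAt
  · intro s hs
    rw [interior_Icc] at hs
    rw [((hder s hs.1 hs.2).1).deriv]
    exact (hder s hs.1 hs.2).2

lemma Gx_endpoint {x : ℝ} (hx : 0 < x) (hx2 : x ≤ 0.2) :
    Gx x ((1-x)/(1+x)) + (1-x) * Real.log (1-x) + x^2/2 - x/2 ≤ 0 := by
  have h1x : (0:ℝ) < 1 + x := by linarith
  have h1x' : (0:ℝ) < 1 - x := by linarith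
  have hwm : 1 - x - ((1-x)/(1+x))*x = (1-x)/(1+x) := by field_simp; ring
  have hlm : Real.log ((1-x)/(1+x)) = Real.log (1-x) - Real.log (1+x) :=
    Real.log_div h1x'.ne' h1x.ne'
  have key : Gx x ((1-x)/(1+x)) + (1-x) * Real.log (1-x) + x^2/2 - x/2
      = ((1-x)/(2*(1+x))) * (Real.log (1-x) + (1 + 2*x) * Real.log (1+x) - x^2) := by
    unfold Gx
    rw [hwm, hlm]
    field_simp
    ring
  rw [key]
  apply mul_nonpos_of_nonneg_of_nonpos
  · positivity
  · exact Pineq hx.le hx2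



theorem stmt_18 (x t : ℝ) (hx : 0 < x) (hx2 : x ≤ 0.2) (hxt : 2 * x / (1 + x) ≤ t)
    (ht : t ≤ 1) :
    entF x t ≤ (1 / 2) * x * t * (1 - x / t + Real.log (x / t)) := by
  have h1x : (0:ℝ) < 1 + x := by linarith
  have ht0 : 0 < t := lt_of_lt_of_le (div_pos (by linarith) h1x) hxt
  have hxt' : 2 * x ≤ t * (1 + x) := by
    rw [div_le_iff₀ h1x] at hxt; linarith
  set s : ℝ := 1 - t with hs_def
  have hs0 : 0 ≤ s := by simp [hs_def]; linarith
  have hsm : s ≤ (1-x)/(1+x) := by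
    rw [le_div_iff₀ h1x]; simp [hs_def]; nlinarith
  have hmm : (0:ℝ) ≤ (1-x)/(1+x) := div_nonneg (by linarith) h1x.le
  have hwpos : 0 < 1 - x - s*x := by
    have : s * (1+x) ≤ 1 - x := (le_div_iff₀ h1x).mp hsm
    nlinarith
  have hlogtx : Real.log (t*x) = Real.log t + Real.log x := Real.log_mul ht0.ne' hx.ne'
  have hlogdiv : Real.log (x/t) = Real.log x - Real.log t := Real.log_div hx.ne' ht0.ne'
  have hlogsx : -((1-t)*x) * Real.log ((1-t)*x)
      = -((1-t)*x) * (Real.log (1-t) + Real.log x) := by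
    rcases eq_or_lt_of_le ht with h | h
    · simp [h]
    · rw [Real.log_mul (by linarith) hx.ne']
  have e1 : 1 - (2-t)*x = 1 - x - s*x := by simp [hs_def]; ring
  have key : entF x t - (1/2)*x*t*(1 - x/t + Real.log (x/t))
      = Gx x s + (1-x) * Real.log (1-x) + x^2/2 - x/2 := by
    unfold entF entHH entH Gx
    rw [e1, hlogtx, hlogdiv]
    have : -((1-t)*x) * Real.log ((1-t)*x)
        = -(s*x) * (Real.log s + Real.log x) := by
      rw [hlogsx]
    rw [this]
    field_simp
    ring
  have h1 : Gx x s ≤ Gx x ((1-x)/(1+x)) :=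
    Gx_mono hx hx2 ⟨hs0, hsm⟩ ⟨hmm, le_refl _⟩ hsm
  have h2 := Gx_endpoint hx hx2
  linarith [key, h1, h2]
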